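/- Let C be an additive category with exact structures D and E such that E is D-projectively generated. Then the class Div(D-E) of D-E-divisible objects satisfies (⊥_D Div(D-E))^{⊥_D} = Div(D-E), i.e., Div(D-E) is the right half of the D-cotorsion pair it generates. -/

import Mathlib

open CategoryTheory Limits ZeroObject

universe v u

variable {C : Type u} [CategoryTheory.Category.{v} C] [CategoryTheory.Preadditive C]
  [CategoryTheory.Limits.HasZeroObject C] [CategoryTheory.Limits.HasFiniteBiproducts C]

/-- An exact structure on an additive category in the sense of Quillen–Keller:
a class of kernel-cokernel pairs (conflations) satisfying the axioms
[E0], [E1], [E2], [E2ᵒᵖ]. -/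
structure ExactStructure (C : Type u) [CategoryTheory.Category.{v} C]
    [CategoryTheory.Preadditive C] [CategoryTheory.Limits.HasZeroObject C]
    [CategoryTheory.Limits.HasFiniteBiproducts C] where
  /-- the distinguished class of short exact sequences -/
  conf : ∀ ⦃X Y Z : C⦄, (X ⟶ Y) → (Y ⟶ Z) → Prop
  /-- every conflation is a kernel-cokernel pair -/
  kerCoker : ∀ {X Y Z : C} (i : X ⟶ Y) (d : Y ⟶ Z), conf i d →
    ∃ w : i ≫ d = 0,
      Nonempty (IsLimit (KernelFork.ofι i w)) ∧
      Nonempty (IsColimit (CokernelCofork.ofπ d w))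
  /-- [E0] the identity of the zero object is a deflation -/
  id_zero_deflation : ∃ (X : C) (i : X ⟶ (0 : C)), conf i (𝟙 (0 : C))
  /-- [E1] the composition of two deflations is a deflation -/
  comp_deflation : ∀ {Y Z W : C} (d : Y ⟶ Z) (e : Z ⟶ W),
    (∃ (X : C) (i : X ⟶ Y), conf i d) → (∃ (X : C) (i : X ⟶ Z), conf i e) →
    ∃ (X : C) (i : X ⟶ Y), conf i (d ≫ e)
  /-- [E2] pullbacks of deflations along arbitrary morphisms exist and are deflations -/
  pullback_deflation : ∀ {Y Z Z' : C} (d : Y ⟶ Z) (f : Z' ⟶ Z),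
    (∃ (X : C) (i : X ⟶ Y), conf i d) →
    ∃ (P : C) (p₁ : P ⟶ Y) (p₂ : P ⟶ Z') (comm : p₁ ≫ d = p₂ ≫ f),
      Nonempty (IsLimit (PullbackCone.mk p₁ p₂ comm)) ∧
      ∃ (X : C) (i : X ⟶ P), conf i p₂
  /-- [E2ᵒᵖ] pushouts of inflations along arbitrary morphisms exist and are inflations -/
  pushout_inflation : ∀ {X Y X' : C} (i : X ⟶ Y) (f : X ⟶ X'),
    (∃ (Z : C) (d : Y ⟶ Z), conf i d) →
    ∃ (Q : C) (q₁ : Y ⟶ Q) (q₂ : X' ⟶ Q) (comm : i ≫ q₁ = f ≫ q₂),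
      Nonempty (IsColimit (PushoutCocone.mk q₁ q₂ comm)) ∧
      ∃ (Z : C) (d : Q ⟶ Z), conf q₂ d

/-- `i` is an `E`-inflation. -/
def ExactStructure.Inflation (E : ExactStructure C) {X Y : C} (i : X ⟶ Y) : Prop :=
  ∃ (Z : C) (d : Y ⟶ Z), E.conf i d

/-- `d` is an `E`-deflation. -/
def ExactStructure.Deflation (E : ExactStructure C) {Y Z : C} (d : Y ⟶ Z) : Prop :=
  ∃ (X : C) (i : X ⟶ Y), E.conf i d

/-- `X` is `D`-`E`-divisible: every `D`-inflation starting at `X` is an `E`-inflation. -/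
def Divisible (D E : ExactStructure C) (X : C) : Prop :=
  ∀ {Y : C} (i : X ⟶ Y), D.Inflation i → E.Inflation i

/-- `Z` is `D`-`E`-flat: every `D`-deflation ending at `Z` is an `E`-deflation. -/
def Flat (D E : ExactStructure C) (Z : C) : Prop :=
  ∀ {Y : C} (d : Y ⟶ Z), D.Deflation d → E.Deflation d

/-- `Ext¹_D(Z, X) = 0`: every `D`-conflation `X ↣ Y ↠ Z` splits. -/
def ExtZero (D : ExactStructure C) (Z X : C) : Prop :=
  ∀ {Y : C} (i : X ⟶ Y) (d : Y ⟶ Z), D.conf i d → ∃ r : Y ⟶ X, i ≫ r = 𝟙 X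

/-- `X` is `D`-injective: every `D`-inflation starting at `X` splits. -/
def DInjective (D : ExactStructure C) (X : C) : Prop :=
  ∀ {Y Z : C} (i : X ⟶ Y) (d : Y ⟶ Z), D.conf i d → ∃ r : Y ⟶ X, i ≫ r = 𝟙 X

/-- `Z` is `D`-projective: every `D`-deflation ending at `Z` splits. -/
def DProjective (D : ExactStructure C) (Z : C) : Prop :=
  ∀ {X Y : C} (i : X ⟶ Y) (d : Y ⟶ Z), D.conf i d → ∃ s : Z ⟶ Y, s ≫ d = 𝟙 Z

/-- `E` is the exact structure `D`-projectively generated by `M`: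
its conflations are exactly the `D`-conflations with respect to which
every object of `M` is projective. -/
def ProjGenBy (D E : ExactStructure C) (M : Set C) : Prop :=
  ∀ {X Y Z : C} (i : X ⟶ Y) (d : Y ⟶ Z),
    E.conf i d ↔ (D.conf i d ∧ ∀ M' ∈ M, ∀ g : M' ⟶ Z, ∃ h : M' ⟶ Y, h ≫ d = g)

/-- `E` is the exact structure `D`-injectively generated by `M`:
its conflations are exactly the `D`-conflations with respect to which
every object of `M` is injective. -/
def InjGenBy (D E : ExactStructure C) (M : Set C) : Prop :=
  ∀ {X Y Z : C} (i : X ⟶ Y) (d : Y ⟶ Z),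
    E.conf i d ↔ (D.conf i d ∧ ∀ M' ∈ M, ∀ g : X ⟶ M', ∃ h : Y ⟶ M', i ≫ h = g)

/-- `𝓐^{⊥_D}`. -/
def rightPerp (D : ExactStructure C) (A : Set C) : Set C :=
  {X | ∀ a ∈ A, ExtZero D a X}

/-- `^{⊥_D}𝓐`. -/
def leftPerp (D : ExactStructure C) (A : Set C) : Set C :=
  {X | ∀ a ∈ A, ExtZero D X a}

/-- `(𝓐, 𝓑)` is a `D`-cotorsion pair. -/
def CotorsionPair (D : ExactStructure C) (A B : Set C) : Prop :=
  rightPerp D A = B ∧ leftPerp D B = A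

/-- `C` has enough `D`-injectives. -/
def EnoughInjectives (D : ExactStructure C) : Prop :=
  ∀ X : C, ∃ (Y Z : C) (i : X ⟶ Y) (d : Y ⟶ Z), D.conf i d ∧ DInjective D Y

/-- `C` has enough `D`-projectives. -/
def EnoughProjectives (D : ExactStructure C) : Prop :=
  ∀ Z : C, ∃ (X Y : C) (i : X ⟶ Y) (d : Y ⟶ Z), D.conf i d ∧ DProjective D Y


private lemma retr_of_sec {X Y Z : C} {i : X ⟶ Y} {d : Y ⟶ Z} (w : i ≫ d = 0)
    (hk : IsLimit (KernelFork.ofι i w)) {s : Z ⟶ Y} (hs : s ≫ d = 𝟙 Z) :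
    ∃ r : Y ⟶ X, i ≫ r = 𝟙 X := by
  have h0 : (𝟙 Y - d ≫ s) ≫ d = 0 := by
    simp only [Preadditive.sub_comp, Category.id_comp, Category.assoc]
    rw [hs]; simp
  obtain ⟨r, hr⟩ := KernelFork.IsLimit.lift' hk (𝟙 Y - d ≫ s) h0
  refine ⟨r, Fork.IsLimit.hom_ext hk ?_⟩
  simp only [Fork.ι_ofι] at hr ⊢
  rw [Category.assoc, hr, Category.id_comp, Preadditive.comp_sub]
  rw [reassoc_of% w]; simp

private lemma sec_of_retr {X Y Z : C} {i : X ⟶ Y} {d : Y ⟶ Z} (w : i ≫ d = 0)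
    (hc : IsColimit (CokernelCofork.ofπ d w)) {r : Y ⟶ X} (hr : i ≫ r = 𝟙 X) :
    ∃ s : Z ⟶ Y, s ≫ d = 𝟙 Z := by
  have h0 : i ≫ (𝟙 Y - r ≫ i) = 0 := by
    simp only [Preadditive.comp_sub, Category.comp_id]
    rw [reassoc_of% hr]; simp
  obtain ⟨s, hsd⟩ := CokernelCofork.IsColimit.desc' hc (𝟙 Y - r ≫ i) h0
  refine ⟨s, Cofork.IsColimit.hom_ext hc ?_⟩
  simp only [Cofork.π_ofπ] at hsd ⊢
  rw [← Category.assoc, hsd, Preadditive.sub_comp]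
  rw [Category.assoc, w]; simp

private lemma coker_iso {X Y Z Z' : C} {i : X ⟶ Y} {d : Y ⟶ Z} {d' : Y ⟶ Z'}
    (w : i ≫ d = 0) (w' : i ≫ d' = 0)
    (hc : IsColimit (CokernelCofork.ofπ d w)) (hc' : IsColimit (CokernelCofork.ofπ d' w')) :
    ∃ c : Z ≅ Z', d ≫ c.hom = d' :=
  ⟨hc.coconePointUniqueUpToIso hc', by
    simpa using hc.comp_coconePointUniqueUpToIso_hom hc' WalkingParallelPair.one⟩

private lemma sec_of_div {D E : ExactStructure C} {M : Set C} (hE : ProjGenBy D E M)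
    {M' : C} (hM' : M' ∈ M) {A W T : C} {ι : A ⟶ W} {δ : W ⟶ T}
    (hconf : D.conf ι δ) (hA : Divisible D E A) (v : M' ⟶ T) [IsIso v] :
    ∃ r : W ⟶ A, ι ≫ r = 𝟙 A := by
  obtain ⟨Z'', δ', hEconf⟩ := hA ι ⟨T, δ, hconf⟩
  obtain ⟨hD', hlift⟩ := (hE ι δ').mp hEconf
  obtain ⟨w, ⟨hk⟩, ⟨hcoc⟩⟩ := D.kerCoker ι δ hconf
  obtain ⟨w', -, ⟨hcoc'⟩⟩ := D.kerCoker ι δ' hD'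
  obtain ⟨c, hcc⟩ := coker_iso w w' hcoc hcoc'
  obtain ⟨h, hh⟩ := hlift M' hM' (v ≫ c.hom)
  have hδ : h ≫ δ = v := by
    have : (h ≫ δ) ≫ c.hom = v ≫ c.hom := by rw [Category.assoc, hcc, hh]
    exact (cancel_mono c.hom).mp this
  have hs : (inv v ≫ h) ≫ δ = 𝟙 T := by rw [Category.assoc, hδ]; simp
  exact retr_of_sec w hk hs

/-- If `E` is `D`-projectively generated, then
`(⊥_D Div(D-E))^{⊥_D} = Div(D-E)`. -/
theorem rightPerp_leftPerp_divisible
    (D E : ExactStructure C) (hE : ∃ M : Set C, ProjGenBy D E M) :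
    rightPerp D (leftPerp D {X : C | Divisible D E X}) = {X : C | Divisible D E X} := by
  obtain ⟨M, hM⟩ := hE
  apply Set.Subset.antisymm
  · intro X hX
    intro Y i hi
    obtain ⟨Z, d, hconf⟩ := hi
    refine ⟨Z, d, (hM i d).mpr ⟨hconf, ?_⟩⟩
    intro M' hM' g
    obtain ⟨w, ⟨hk⟩, -⟩ := D.kerCoker i d hconf
    obtain ⟨P, p₁, p₂, comm, ⟨hp⟩, X'', i'', hP⟩ := D.pullback_deflation d g ⟨X, i, hconf⟩
    obtain ⟨w2, ⟨hk2⟩, ⟨hc2⟩⟩ := D.kerCoker i'' p₂ hP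
    -- j : X ⟶ P with j ≫ p₁ = i, j ≫ p₂ = 0
    obtain ⟨j, hj₁, hj₂⟩ := PullbackCone.IsLimit.lift' hp i 0 (by simp [w])
    simp only [PullbackCone.mk_fst, PullbackCone.mk_snd] at hj₁ hj₂
    change X ⟶ P at j
    change j ≫ p₁ = i at hj₁
    change j ≫ p₂ = 0 at hj₂
    have mono_i : ∀ {T : C} (a b : T ⟶ X), a ≫ i = b ≫ i → a = b := fun a b hab =>
      Fork.IsLimit.hom_ext hk (by simpa using hab)
    have mono_i'' : ∀ {T : C} (a b : T ⟶ X''), a ≫ i'' = b ≫ i'' → a = b := fun a b hab =>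
      Fork.IsLimit.hom_ext hk2 (by simpa using hab)
    -- l : X'' ⟶ X
    obtain ⟨l, hl⟩ := KernelFork.IsLimit.lift' hk (i'' ≫ p₁) (by
      rw [Category.assoc, comm, reassoc_of% w2]; simp)
    simp only [Fork.ι_ofι] at hl
    change X'' ⟶ X at l
    change l ≫ i = i'' ≫ p₁ at hl
    have hlj : l ≫ j = i'' := by
      apply PullbackCone.IsLimit.hom_ext hp
      · change (l ≫ j) ≫ p₁ = i'' ≫ p₁
        simpa [hl] using (by rw [Category.assoc, hj₁, hl] :
          (l ≫ j) ≫ p₁ = i'' ≫ p₁)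
      · simp only [PullbackCone.mk_snd]
        change (l ≫ j) ≫ p₂ = i'' ≫ p₂
        rw [Category.assoc, hj₂, w2]; simp
    -- m : X ⟶ X''
    obtain ⟨m, hm⟩ := KernelFork.IsLimit.lift' hk2 j hj₂
    simp only [Fork.ι_ofι] at hm
    change X ⟶ X'' at m
    change m ≫ i'' = j at hm
    have hlm : l ≫ m = 𝟙 X'' := mono_i'' _ _ (by rw [Category.assoc, hm, hlj]; simp)
    have hml : m ≫ l = 𝟙 X := mono_i _ _ (by
      rw [Category.assoc, hl, ← Category.assoc, hm, hj₁]; simp)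
    -- pushout of i'' along l
    obtain ⟨Q, q₁, q₂, pcomm, ⟨hpo⟩, Z₀, d₀, hQ⟩ := D.pushout_inflation i'' l ⟨M', p₂, hP⟩
    obtain ⟨w3, -, ⟨hc3⟩⟩ := D.kerCoker q₂ d₀ hQ
    -- t : Q ⟶ P with q₁ ≫ t = 𝟙, q₂ ≫ t = m ≫ i''
    obtain ⟨t, ht₁, ht₂⟩ := PushoutCocone.IsColimit.desc' hpo (𝟙 P) (m ≫ i'') (by
      rw [Category.comp_id, ← Category.assoc, hlm, Category.id_comp])
    simp only [PushoutCocone.mk_inl, PushoutCocone.mk_inr] at ht₁ ht₂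
    change Q ⟶ P at t
    change q₁ ≫ t = 𝟙 P at ht₁
    change q₂ ≫ t = m ≫ i'' at ht₂
    have htq : t ≫ q₁ = 𝟙 Q := by
      apply PushoutCocone.IsColimit.hom_ext hpo
      · simp only [PushoutCocone.mk_inl]
        change q₁ ≫ t ≫ q₁ = q₁ ≫ 𝟙 Q
        rw [← Category.assoc, ht₁]; simp
      · simp only [PushoutCocone.mk_inr]
        change q₂ ≫ t ≫ q₁ = q₂ ≫ 𝟙 Q
        rw [← Category.assoc, ht₂, Category.assoc, pcomm, ← Category.assoc, hml]; simp
    -- iso α : M' ⟶ Z₀ with p₂ ≫ α = q₁ ≫ d₀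
    obtain ⟨α, hα⟩ := CokernelCofork.IsColimit.desc' hc2 (q₁ ≫ d₀) (by
      rw [← Category.assoc, pcomm, Category.assoc, w3]; simp)
    simp only [Cofork.π_ofπ] at hα
    change M' ⟶ Z₀ at α
    change p₂ ≫ α = q₁ ≫ d₀ at hα
    obtain ⟨β, hβ⟩ := CokernelCofork.IsColimit.desc' hc3 (t ≫ p₂) (by
      rw [← Category.assoc, ht₂, Category.assoc, w2]; simp)
    simp only [Cofork.π_ofπ] at hβ
    change Z₀ ⟶ M' at β
    change d₀ ≫ β = t ≫ p₂ at hβ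
    have epi_p₂ : ∀ {T : C} (a b : M' ⟶ T), p₂ ≫ a = p₂ ≫ b → a = b := fun a b hab =>
      Cofork.IsColimit.hom_ext hc2 (by simpa using hab)
    have epi_d₀ : ∀ {T : C} (a b : Z₀ ⟶ T), d₀ ≫ a = d₀ ≫ b → a = b := fun a b hab =>
      Cofork.IsColimit.hom_ext hc3 (by simpa using hab)
    have hαβ : α ≫ β = 𝟙 M' := epi_p₂ _ _ (by
      rw [← Category.assoc, hα, Category.assoc, hβ, ← Category.assoc, ht₁]; simp)
    have hβα : β ≫ α = 𝟙 Z₀ := epi_d₀ _ _ (by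
      rw [← Category.assoc, hβ, Category.assoc, hα, ← Category.assoc, htq]; simp)
    have : IsIso α := ⟨β, hαβ, hβα⟩
    -- Z₀ ∈ leftPerp of divisibles
    have hZ₀ : Z₀ ∈ leftPerp D {X : C | Divisible D E X} := by
      intro A hA
      intro W ι δ hcf
      exact sec_of_div hM hM' hcf hA α
    -- split q₂ using hX
    obtain ⟨r, hr⟩ := hX Z₀ hZ₀ q₂ d₀ hQ
    -- retraction of i''
    have hretr : i'' ≫ (q₁ ≫ r ≫ m) = 𝟙 X'' := by
      rw [reassoc_of% pcomm, reassoc_of% hr, hlm]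
    obtain ⟨s, hs⟩ := sec_of_retr w2 hc2 hretr
    exact ⟨s ≫ p₁, by rw [Category.assoc, comm, ← Category.assoc, hs]; simp⟩
  · intro X hX a ha
    exact ha X hX
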